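/- For every β > 0 and every s ∈ (-1/2, 1/2), the s-weighted time filter integrates to one half: ∫_ℝ g_s(t) dt = 1/2, where g_s(t) := (2/β)·cos(sπ)·cosh(2πt/β)/(cosh(4πt/β) + cos(2sπ)). -/

import Mathlib

open MeasureTheory Matrix
open scoped Kronecker ComplexOrder

noncomputable section

namespace QMS

attribute [local instance] Matrix.frobeniusNormedAddCommGroup Matrix.frobeniusNormedSpace

variable {m : Type*} [Fintype m] [DecidableEq m]

/-- Index type for an `n`-qubit system. -/
abbrev QIdx (n : ℕ) := Fin n → Fin 2

/-- The operator (spectral) norm of a matrix. -/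
def opNorm (M : Matrix m m ℂ) : ℝ := ‖Matrix.toEuclideanCLM (𝕜 := ℂ) M‖

/-- The squared Frobenius (Schatten-2) norm. -/
def frobNormSq (M : Matrix m m ℂ) : ℝ := ((Mᴴ * M).trace).re

/-- The trace (Schatten-1) norm. -/
def traceNorm (M : Matrix m m ℂ) : ℝ :=
  (((Matrix.posSemidef_conjTranspose_mul_self M).1.eigenvectorUnitary : Matrix m m ℂ) *
    Matrix.diagonal (((↑) : ℝ → ℂ) ∘ (√·) ∘ (Matrix.posSemidef_conjTranspose_mul_self M).1.eigenvalues) *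
    (star (Matrix.posSemidef_conjTranspose_mul_self M).1.eigenvectorUnitary : Matrix m m ℂ)).trace.re

/-- Functional calculus for Hermitian matrices (junk value `0` otherwise). -/
def matFun (f : ℝ → ℝ) (M : Matrix m m ℂ) : Matrix m m ℂ :=
  @dite _ (M.IsHermitian) (Classical.dec _)
    (fun h => (h.eigenvectorUnitary : Matrix m m ℂ) *
        Matrix.diagonal (fun i => (f (h.eigenvalues i) : ℂ)) *
        star (h.eigenvectorUnitary : Matrix m m ℂ))
    (fun _ => 0)

/-- Real matrix power via functional calculus. -/
def mpow (M : Matrix m m ℂ) (s : ℝ) : Matrix m m ℂ := matFun (fun x => x ^ s) M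

/-- Matrix logarithm via functional calculus. -/
def mlog (M : Matrix m m ℂ) : Matrix m m ℂ := matFun Real.log M

/-- Matrix square root via functional calculus. -/
def msqrt (M : Matrix m m ℂ) : Matrix m m ℂ := mpow M (1/2 : ℝ)

/-- The von Neumann entropy `S(σ) = -Tr[σ log σ]`. -/
def entropy (M : Matrix m m ℂ) : ℝ :=
  @dite _ (M.IsHermitian) (Classical.dec _)
    (fun h => -∑ i, h.eigenvalues i * Real.log (h.eigenvalues i)) (fun _ => 0)

/-- Matrix exponential. -/
def mexp (M : Matrix m m ℂ) : Matrix m m ℂ := NormedSpace.exp M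

/-- The Gibbs state `ρ = e^{-βH}/Tr[e^{-βH}]`. -/
def gibbs (H : Matrix m m ℂ) (β : ℝ) : Matrix m m ℂ :=
  ((mexp ((-(β : ℂ)) • H)).trace)⁻¹ • mexp ((-(β : ℂ)) • H)

/-- Heisenberg evolution `A(t) = e^{iHt} A e^{-iHt}`. -/
def heis (H A : Matrix m m ℂ) (t : ℝ) : Matrix m m ℂ :=
  mexp ((Complex.I * (t : ℂ)) • H) * A * mexp ((-(Complex.I * (t : ℂ))) • H)

/-- The Gaussian time filter `f_ς(t)`. -/
def fG (ς t : ℝ) : ℝ := Real.exp (-(ς^2 * t^2)) * Real.sqrt (ς * Real.sqrt (2 / Real.pi))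

/-- The Fourier transform `f̂_ς(ω)` of the Gaussian filter. -/
def fGhat (ς ω : ℝ) : ℝ :=
  Real.exp (-(ω^2 / (4 * ς^2))) / Real.sqrt (ς * Real.sqrt (2 * Real.pi))

/-- The operator Fourier transform `Â(ω)`. -/
def oft (H : Matrix m m ℂ) (ς : ℝ) (A : Matrix m m ℂ) (ω : ℝ) : Matrix m m ℂ :=
  (1 / Real.sqrt (2 * Real.pi)) •
    ∫ t : ℝ, (Complex.exp (-(Complex.I * (ω : ℂ) * (t : ℂ))) * ((fG ς t : ℝ) : ℂ)) • heis H A t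

/-- The time-evolved operator Fourier transform `Â(ω, t)`. -/
def oft2 (H : Matrix m m ℂ) (ς : ℝ) (A : Matrix m m ℂ) (ω t : ℝ) : Matrix m m ℂ :=
  heis H (oft H ς A ω) t

/-- The shifted Metropolis weight `γ(ω)`. -/
def metro (β ς ω : ℝ) : ℝ := Real.exp (-(β * max (ω + β * ς^2 / 2) 0))

/-- The Dirichlet frequency filter `h(ω)`. -/
def hFil (β ς ω : ℝ) : ℝ := Real.exp (-(ς^2 * β^2 / 8)) * Real.exp (-(|ω| * β / 2))

/-- The Dirichlet time filter `g(t)`. -/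
def gFil (β t : ℝ) : ℝ := 1 / (β * Real.cosh (2 * Real.pi * t / β))

/-- The coherent-term time filter `c(t)`. -/
def cFil (β t : ℝ) : ℝ := 1 / (β * Real.sinh (2 * Real.pi * t / β))

/-- The `s`-weighted frequency filter `h_s(ω)`. -/
def hFilS (β ς s ω : ℝ) : ℝ :=
  Real.exp (s * β * (2 * ω - s * β * ς^2) / 2) * hFil β ς (ω - s * β * ς^2)

/-- The `s`-weighted time filter `g_s(t)`. -/
def gFilS (β s t : ℝ) : ℝ :=
  (2 / β) * (Real.cos (s * Real.pi) * Real.cosh (2 * Real.pi * t / β)) /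
    (Real.cosh (4 * Real.pi * t / β) + Real.cos (2 * s * Real.pi))

/-- The ADB time filter `g^{ADB}_s(t)`. -/
def gADB (β s t : ℝ) : ℝ :=
  (1 / (2 * Real.pi * β)) *
    Real.log ((Real.cosh (2 * Real.pi * t / β) + Real.cos (s * Real.pi)) /
      (Real.cosh (2 * Real.pi * t / β) - Real.cos (s * Real.pi)))

/-- The coherent term `C^a`. -/
def coherent (H : Matrix m m ℂ) (β ς : ℝ) (A : Matrix m m ℂ) : Matrix m m ℂ :=
  ∫ t : ℝ, ∫ ω : ℝ, ((metro β ς ω * cFil β t : ℝ)) • ((oft2 H ς A ω t)ᴴ * oft2 H ς A ω t)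

/-- The local (KMS detailed balanced) Lindbladian `L_a` with jump `A`. -/
def lindblad (H : Matrix m m ℂ) (β ς : ℝ) (A X : Matrix m m ℂ) : Matrix m m ℂ :=
  (-Complex.I) • (coherent H β ς A * X - X * coherent H β ς A) +
    ∫ ω : ℝ, (metro β ς ω : ℝ) •
      (oft H ς A ω * X * (oft H ς A ω)ᴴ -
        (2⁻¹ : ℂ) • ((oft H ς A ω)ᴴ * oft H ς A ω * X + X * ((oft H ς A ω)ᴴ * oft H ς A ω)))

/-- The Heisenberg picture (Hilbert-Schmidt adjoint) Lindbladian `L_a†`. -/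
def lindbladDag (H : Matrix m m ℂ) (β ς : ℝ) (A Y : Matrix m m ℂ) : Matrix m m ℂ :=
  Complex.I • (coherent H β ς A * Y - Y * coherent H β ς A) +
    ∫ ω : ℝ, (metro β ς ω : ℝ) •
      ((oft H ς A ω)ᴴ * Y * oft H ς A ω -
        (2⁻¹ : ℂ) • ((oft H ς A ω)ᴴ * oft H ς A ω * Y + Y * ((oft H ς A ω)ᴴ * oft H ς A ω)))

/-- The Hilbert-Schmidt adjoint of a superoperator. -/
def hsAdj (Φ : Matrix m m ℂ → Matrix m m ℂ) (Y : Matrix m m ℂ) : Matrix m m ℂ :=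
  ∑ a : m, ∑ b : m,
    (((Φ (Matrix.single a b 1))ᴴ * Y).trace) • Matrix.single a b 1

/-- A superoperator is trace preserving. -/
def TracePreserving (Φ : Matrix m m ℂ → Matrix m m ℂ) : Prop :=
  ∀ X, (Φ X).trace = X.trace

/-- A superoperator is completely positive. -/
def IsCP (Φ : Matrix m m ℂ → Matrix m m ℂ) : Prop :=
  ∀ (k : ℕ) (X : Matrix (m × Fin k) (m × Fin k) ℂ), X.PosSemidef →
    (Matrix.of fun p q : m × Fin k =>
      Φ (Matrix.of fun a b => X (a, p.2) (b, q.2)) p.1 q.1).PosSemidef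

/-- The exponential `e^{sL}` of a superoperator `L`. -/
def superExp (L : Matrix m m ℂ → Matrix m m ℂ) (s : ℝ) (X : Matrix m m ℂ) : Matrix m m ℂ :=
  ∑' k : ℕ, ((s ^ k / (Nat.factorial k) : ℝ)) • L^[k] X

/-- The time-averaging map `R_t[X] = (1/t) ∫₀ᵗ e^{sL}[X] ds`. -/
def timeAvg (L : Matrix m m ℂ → Matrix m m ℂ) (t : ℝ) (X : Matrix m m ℂ) : Matrix m m ℂ :=
  (1 / t) • ∫ s in (0 : ℝ)..t, superExp L s X

/-- The squared `(σ, s)`-weighted norm `‖X‖²_{σ,s} = Tr[X† σ^{1/2+s} X σ^{1/2-s}]`. -/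
def wNormSq (σ : Matrix m m ℂ) (s : ℝ) (X : Matrix m m ℂ) : ℝ :=
  ((Xᴴ * mpow σ (1/2 + s) * X * mpow σ (1/2 - s)).trace).re

/-- Approximate detailed balance error `ADB_a[σ]`. -/
def adb (H : Matrix m m ℂ) (β ς : ℝ) (A σ : Matrix m m ℂ) : ℝ :=
  ∫ t : ℝ, ∫ ω : ℝ,
    frobNormSq (oft2 H ς A ω t * msqrt σ -
        msqrt σ * mpow (gibbs H β) (-(1/2 : ℝ)) * oft2 H ς A ω t * mpow (gibbs H β) (1/2 : ℝ)) *
      metro β ς ω * gFil β t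

/-- The relative Fisher information `FI_a[σ‖ρ]`. -/
def fisherInfo (H : Matrix m m ℂ) (β ς : ℝ) (A σ : Matrix m m ℂ) : ℝ :=
  ∫ t : ℝ, ∫ ω : ℝ, ∫ s in (-(1/2) : ℝ)..(1/2 : ℝ),
    wNormSq σ s (oft2 H ς A ω t * (mlog σ - mlog (gibbs H β)) -
        (mlog σ - mlog (gibbs H β)) * oft2 H ς A ω t) *
      hFilS β ς s ω * gFilS β s t

/-- The set of Bohr frequencies of a Hermitian matrix. -/
def bohrSet {H : Matrix m m ℂ} (hH : H.IsHermitian) : Finset ℝ :=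
  Finset.image (fun p : m × m => hH.eigenvalues p.1 - hH.eigenvalues p.2) Finset.univ

/-- The Bohr-frequency component `X_ν`. -/
def bohrComp {H : Matrix m m ℂ} (hH : H.IsHermitian) (X : Matrix m m ℂ) (ν : ℝ) :
    Matrix m m ℂ :=
  (hH.eigenvectorUnitary : Matrix m m ℂ) *
    (Matrix.of fun i j =>
      @ite _ (hH.eigenvalues i - hH.eigenvalues j = ν) (Classical.dec _)
        ((star (hH.eigenvectorUnitary : Matrix m m ℂ) * X *
          (hH.eigenvectorUnitary : Matrix m m ℂ)) i j) 0) *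
    star (hH.eigenvectorUnitary : Matrix m m ℂ)

/- n-qubit machinery -/

/-- The single qubit Pauli matrices `I, X, Y, Z`. -/
def pauli1 : Fin 4 → Matrix (Fin 2) (Fin 2) ℂ :=
  ![1, !![0, 1; 1, 0], !![0, -Complex.I; Complex.I, 0], !![1, 0; 0, -1]]

/-- The Pauli string `⊗_i P_{p i}`. -/
def pauliString {n : ℕ} (p : Fin n → Fin 4) : Matrix (QIdx n) (QIdx n) ℂ :=
  Matrix.of fun x y => ∏ i, pauli1 (p i) (x i) (y i)

/-- The single-qubit Pauli `X_i, Y_i, Z_i` acting on qubit `i` of an `n`-qubit system. -/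
def sqPauli {n : ℕ} (i : Fin n) (k : Fin 3) : Matrix (QIdx n) (QIdx n) ℂ :=
  pauliString (fun j => if j = i then (⟨k.val + 1, by omega⟩ : Fin 4) else 0)

/-- Merge configurations on a region and its complement. -/
def merge {n : ℕ} (A : Finset (Fin n)) (u : {i : Fin n // i ∈ A} → Fin 2)
    (v : {i : Fin n // i ∉ A} → Fin 2) : QIdx n :=
  fun i => if h : i ∈ A then u ⟨i, h⟩ else v ⟨i, h⟩

/-- Restriction of a configuration to a region. -/
def restr {n : ℕ} (A : Finset (Fin n)) (x : QIdx n) : {i : Fin n // i ∈ A} → Fin 2 :=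
  fun i => x i.1

/-- Restriction of a configuration to the complement of a region. -/
def restrC {n : ℕ} (A : Finset (Fin n)) (x : QIdx n) : {i : Fin n // i ∉ A} → Fin 2 :=
  fun i => x i.1

/-- The partial trace onto region `A` (tracing out the complement). -/
def ptrace {n : ℕ} (A : Finset (Fin n)) (σ : Matrix (QIdx n) (QIdx n) ℂ) :
    Matrix ({i : Fin n // i ∈ A} → Fin 2) ({i : Fin n // i ∈ A} → Fin 2) ℂ :=
  Matrix.of fun a b => ∑ v : {i : Fin n // i ∉ A} → Fin 2, σ (merge A a v) (merge A b v)

/-- The partial trace onto the complement of region `A`. -/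
def ptraceC {n : ℕ} (A : Finset (Fin n)) (σ : Matrix (QIdx n) (QIdx n) ℂ) :
    Matrix ({i : Fin n // i ∉ A} → Fin 2) ({i : Fin n // i ∉ A} → Fin 2) ℂ :=
  Matrix.of fun u v => ∑ a : {i : Fin n // i ∈ A} → Fin 2, σ (merge A a u) (merge A a v)

/-- The mutual information `I(A : Ā)_σ = S(σ_A) + S(σ_Ā) - S(σ)`. -/
def mutualInfo {n : ℕ} (A : Finset (Fin n)) (σ : Matrix (QIdx n) (QIdx n) ℂ) : ℝ :=
  entropy (ptrace A σ) + entropy (ptraceC A σ) - entropy σ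

/-- The product state `σ_Ā ⊗ σ_A`, reindexed on the full system. -/
def prodState {n : ℕ} (A : Finset (Fin n)) (σ : Matrix (QIdx n) (QIdx n) ℂ) :
    Matrix (QIdx n) (QIdx n) ℂ :=
  Matrix.of fun x y =>
    ptrace A σ (restr A x) (restr A y) * ptraceC A σ (restrC A x) (restrC A y)

/-- Extension `N ⊗ id` of a superoperator on region `A` to the full system. -/
def actOnRegion {n : ℕ} (A : Finset (Fin n))
    (N : Matrix ({i : Fin n // i ∈ A} → Fin 2) ({i : Fin n // i ∈ A} → Fin 2) ℂ →
         Matrix ({i : Fin n // i ∈ A} → Fin 2) ({i : Fin n // i ∈ A} → Fin 2) ℂ)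
    (X : Matrix (QIdx n) (QIdx n) ℂ) : Matrix (QIdx n) (QIdx n) ℂ :=
  Matrix.of fun x y =>
    N (Matrix.of fun a b => X (merge A a (restrC A x)) (merge A b (restrC A y)))
      (restr A x) (restr A y)

/-- The sum of the local Lindbladians with single-qubit Pauli jumps in region `A`
(with Gaussian width `ς = 1/β`). -/
def lindbladRegion {n : ℕ} (H : Matrix (QIdx n) (QIdx n) ℂ) (β : ℝ) (A : Finset (Fin n))
    (X : Matrix (QIdx n) (QIdx n) ℂ) : Matrix (QIdx n) (QIdx n) ℂ :=
  ∑ i ∈ A, ∑ k : Fin 3, lindblad H β (1/β) (sqPauli i k) X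

/-- The full thermal Lindbladian `L = -i[H,·] + Σ_a L_a` with all single-qubit Pauli jumps
(with Gaussian width `ς = 1/β`). -/
def fullLindblad {n : ℕ} (H : Matrix (QIdx n) (QIdx n) ℂ) (β : ℝ)
    (X : Matrix (QIdx n) (QIdx n) ℂ) : Matrix (QIdx n) (QIdx n) ℂ :=
  (-Complex.I) • (H * X - X * H) + ∑ i : Fin n, ∑ k : Fin 3, lindblad H β (1/β) (sqPauli i k) X

/-- A matrix on `n` qubits is supported on the set `S` of qubits. -/
def SupportedOn {n : ℕ} (S : Finset (Fin n)) (M : Matrix (QIdx n) (QIdx n) ℂ) : Prop :=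
  (∀ x y : QIdx n, (∃ i, i ∉ S ∧ x i ≠ y i) → M x y = 0) ∧
  (∀ x y x' y' : QIdx n, (∀ i ∈ S, x i = x' i) → (∀ i ∈ S, y i = y' i) →
    (∀ i, i ∉ S → x i = y i) → (∀ i, i ∉ S → x' i = y' i) → M x y = M x' y')


/-- The `s`-weighted time filter integrates to `1/2`. -/
theorem gFilS_integral (β : ℝ) (hβ : 0 < β) (s : ℝ)
    (hs : s ∈ Set.Ioo (-(1/2) : ℝ) (1/2 : ℝ)) :
    ∫ t : ℝ, gFilS β s t = 1/2 := by
  obtain ⟨hs1, hs2⟩ := hs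
  have hπ := Real.pi_pos
  set c := Real.cos (s * Real.pi) with hc_def
  have hc : 0 < c := by
    apply Real.cos_pos_of_mem_Ioo
    constructor <;> nlinarith
  set F : ℝ → ℝ := fun t => (1 / (2 * Real.pi)) *
      Real.arctan (Real.sinh (2 * Real.pi * t / β) / c) with hF_def
  -- derivative
  have hderiv : ∀ t : ℝ, HasDerivAt F (gFilS β s t) t := by
    intro t
    have h1 : HasDerivAt (fun t : ℝ => 2 * Real.pi * t / β) (2 * Real.pi / β) t := by
      simpa using ((hasDerivAt_id t).const_mul (2 * Real.pi)).div_const β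
    have h2 := (Real.hasDerivAt_sinh (2 * Real.pi * t / β)).comp t h1
    have h3 := h2.div_const c
    have h4 := (Real.hasDerivAt_arctan (Real.sinh (2 * Real.pi * t / β) / c)).comp t h3
    have h5 := h4.const_mul (1 / (2 * Real.pi))
    refine h5.congr_deriv (Eq.symm ?_)
    have e1 : (4 : ℝ) * Real.pi * t / β = 2 * (2 * Real.pi * t / β) := by ring
    have e2 : (2 : ℝ) * s * Real.pi = 2 * (s * Real.pi) := by ring
    rw [gFilS, e1, Real.cosh_two_mul, e2, Real.cos_two_mul, Real.cosh_sq]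
    rw [← hc_def]
    have hs2 : (0 : ℝ) ≤ Real.sinh (2 * Real.pi * t / β) ^ 2 := sq_nonneg _
    have hden : Real.sinh (2 * Real.pi * t / β) ^ 2 + 1 +
        Real.sinh (2 * Real.pi * t / β) ^ 2 + (2 * c ^ 2 - 1) ≠ 0 := by nlinarith
    have hden2 : 1 + (Real.sinh (2 * Real.pi * t / β) / c) ^ 2 ≠ 0 := by positivity
    field_simp
    ring
  -- positivity of the integrand
  have hpos : ∀ t : ℝ, 0 ≤ gFilS β s t := by
    intro t
    rw [gFilS]
    apply div_nonneg
    · have := Real.cosh_pos (2 * Real.pi * t / β)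
      have : (0:ℝ) < 2 / β := by positivity
      positivity
    · have h1 := Real.one_le_cosh (4 * Real.pi * t / β)
      have h2 := Real.neg_one_le_cos (2 * s * Real.pi)
      linarith
  -- limits
  have hlintop : Filter.Tendsto (fun t : ℝ => 2 * Real.pi * t / β) Filter.atTop Filter.atTop := by
    apply Filter.Tendsto.atTop_div_const hβ
    exact Filter.Tendsto.const_mul_atTop (by positivity) Filter.tendsto_id
  have hlinbot : Filter.Tendsto (fun t : ℝ => 2 * Real.pi * t / β) Filter.atBot Filter.atBot := by
    apply Filter.Tendsto.atBot_div_const hβ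
    exact Filter.Tendsto.const_mul_atBot (by positivity) Filter.tendsto_id
  have hsinh_top : Filter.Tendsto Real.sinh Filter.atTop Filter.atTop := by
    apply Filter.tendsto_atTop_mono' Filter.atTop _ Filter.tendsto_id
    filter_upwards [Filter.eventually_ge_atTop (0:ℝ)] with x hx
    exact Real.self_le_sinh_iff.mpr hx
  have hsinh_bot : Filter.Tendsto Real.sinh Filter.atBot Filter.atBot := by
    apply Filter.tendsto_atBot_mono' Filter.atBot _ Filter.tendsto_id
    filter_upwards [Filter.eventually_le_atBot (0:ℝ)] with x hx
    exact Real.sinh_le_self_iff.mpr hx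
  have htop : Filter.Tendsto F Filter.atTop (nhds (1 / (2 * Real.pi) * (Real.pi / 2))) := by
    apply Filter.Tendsto.const_mul
    exact (Real.tendsto_arctan_atTop.mono_right nhdsWithin_le_nhds).comp
      ((hsinh_top.comp hlintop).atTop_div_const hc)
  have hbot : Filter.Tendsto F Filter.atBot (nhds (1 / (2 * Real.pi) * (-(Real.pi / 2)))) := by
    apply Filter.Tendsto.const_mul
    exact (Real.tendsto_arctan_atBot.mono_right nhdsWithin_le_nhds).comp
      ((hsinh_bot.comp hlinbot).atBot_div_const hc)
  -- integrability
  have hIoi : IntegrableOn (gFilS β s) (Set.Ioi (0:ℝ)) :=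
    integrableOn_Ioi_deriv_of_nonneg' (fun x _ => hderiv x) (fun x _ => hpos x) htop
  have heven : ∀ x : ℝ, gFilS β s (-x) = gFilS β s x := by
    intro x
    simp [gFilS, mul_neg, neg_div, Real.cosh_neg]
  have hint : Integrable (gFilS β s) := by
    rw [← integrableOn_univ, ← Set.Iio_union_Ici (a := (0:ℝ)), integrableOn_union,
      integrableOn_Ici_iff_integrableOn_Ioi]
    refine ⟨?_, hIoi⟩
    rw [← (Measure.measurePreserving_neg (volume : Measure ℝ)).integrableOn_comp_preimage
        (Homeomorph.neg ℝ).measurableEmbedding]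
    have hpre : (Neg.neg ⁻¹' Set.Iio (0:ℝ)) = Set.Ioi 0 := by ext x; simp
    simp only [Function.comp_def, hpre]
    exact hIoi.congr_fun (fun x _ => (heven x).symm) measurableSet_Ioi
  have := MeasureTheory.integral_of_hasDerivAt_of_tendsto hderiv hint hbot htop
  rw [this]
  field_simp
  ring

end QMS
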